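/- Let K ≥ 1, γ̃ > 0. Let Z_1,…,Z_K be i.i.d. with SR-type density with parameters (α, Θ_a, N_a, ζ_a) satisfying ζ_a(0) = 1; let V_1,…,V_K be i.i.d. Gamma(m, m/Ω) with real 0 < m < 1 and Ω > 0; let W_c be as in Lemma 2 of the paper with fixed parameters and E[(1+W_c)^{mK}] < ∞; all mutually independent. Then lim_{η→∞} η^{m·K} · Pr[max_{1≤k≤K} min(η·Z_k, η·V_k) < γ̃·(1+W_c)] = (1/Γ(m+1))^K · (m·γ̃/Ω)^{m·K} · E[(1+W_c)^{m·K}]. In particular, for terrestrial Nakagami parameter m < 1 the satellite network achieves diversity order m·K. (Corollary 3 of the paper, Case 2 with m_cb < 1.) -/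

import Mathlib

open MeasureTheory ProbabilityTheory Real Filter

noncomputable section

/-- SR-type density with parameters `(α, Θ, N, ζ)`:
`f(x) = α·Σ_{κ=0}^{N} ζ(κ)·x^κ·e^{−Θ·x}` for `x ≥ 0`, `0` otherwise. -/
def srPDF (α Θ : ℝ) (N : ℕ) (ζ : ℕ → ℝ) (x : ℝ) : ℝ :=
  if 0 ≤ x then α * ∑ κ ∈ Finset.range (N + 1), ζ κ * x ^ κ * Real.exp (-Θ * x) else 0

/-- Gamma density with shape `a` and rate `b`. -/
def gammaPDF (a b : ℝ) (x : ℝ) : ℝ :=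
  if 0 ≤ x then b ^ a * x ^ (a - 1) * Real.exp (-b * x) / Real.Gamma a else 0

/-- `X` has density `f` with respect to Lebesgue measure. -/
def HasDensity {Ω : Type*} [MeasurableSpace Ω] (P : Measure Ω) (X : Ω → ℝ) (f : ℝ → ℝ) : Prop :=
  Measure.map X P = volume.withDensity (fun x => ENNReal.ofReal (f x))

/-- Beta function `B(x,y) = Γ(x)Γ(y)/Γ(x+y)`. -/
def betaFn (x y : ℝ) : ℝ := Real.Gamma x * Real.Gamma y / Real.Gamma (x + y)

/-- Ascending (Pochhammer) factorial `(a)_n`. -/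
def poch (a : ℝ) (n : ℕ) : ℝ := (ascPochhammer ℝ n).eval a

/-- Kummer confluent hypergeometric function `₁F₁(a; b; z)`. -/
def oneF1 (a b z : ℝ) : ℝ := ∑' n : ℕ, (poch a n / poch b n) * z ^ n / (n.factorial : ℝ)

/-- Gauss hypergeometric function `₂F₁(a,b;c;z)` via the Euler integral. -/
def twoF1 (a b c z : ℝ) : ℝ :=
  (Real.Gamma c / (Real.Gamma a * Real.Gamma (c - a))) *
    ∫ t in (0:ℝ)..1, t ^ (a - 1) * (1 - t) ^ (c - a - 1) * (1 - z * t) ^ (-b)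

/-- Tricomi confluent hypergeometric function `U(a, b; z)`. -/
def tricomiU (a b z : ℝ) : ℝ :=
  (1 / Real.Gamma a) * ∫ t in Set.Ioi (0:ℝ), Real.exp (-z * t) * t ^ (a - 1) * (1 + t) ^ (b - a - 1)

/-- `Λ(i) = i_1 + ⋯ + i_M + M` for a multi-index `i`. -/
def ΛIdx (M : ℕ) (i : ℕ → ℕ) : ℕ := (∑ k ∈ Finset.range M, i k) + M

/-- `C_i = α^M·(Π ζ(i_κ))·(Π_{j=1}^{M−1} B(i_1+⋯+i_j+j, i_{j+1}+1))`. -/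
def Ccoef (α : ℝ) (ζ : ℕ → ℝ) (M : ℕ) (i : ℕ → ℕ) : ℝ :=
  α ^ M * (∏ k ∈ Finset.range M, ζ (i k)) *
    ∏ j ∈ Finset.range (M - 1),
      betaFn ((∑ l ∈ Finset.range (j + 1), (i l : ℝ)) + (j + 1)) ((i (j + 1) : ℝ) + 1)

/-- Extend a `Fin M`-indexed multi-index with values in `{0,…,N}` to `ℕ → ℕ`. -/
def toIdx {M N : ℕ} (i : Fin M → Fin (N + 1)) : ℕ → ℕ :=
  fun l => if h : l < M then (i ⟨l, h⟩ : ℕ) else 0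

/-- Density of the hybrid interference `W_c = W_s + W_t` (Lemma 2 of the paper). -/
def wcPDF (α Θ : ℝ) (N M : ℕ) (ζ : ℕ → ℝ) (μt r : ℝ) (w : ℝ) : ℝ :=
  if 0 ≤ w then
    ∑ i : Fin M → Fin (N + 1),
      Ccoef α ζ M (toIdx i) *
        (r ^ μt * betaFn (ΛIdx M (toIdx i)) μt / Real.Gamma μt) *
        w ^ ((ΛIdx M (toIdx i) : ℝ) + μt - 1) * Real.exp (-r * w) *
        oneF1 (ΛIdx M (toIdx i)) ((ΛIdx M (toIdx i) : ℝ) + μt) (-(Θ - r) * w)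
  else 0

/-- The interference sum appearing in Theorem 1 / Appendix A of the paper:
`Σ_i C_i·(r^{μ_t}·B(μ_t,Λ(i))/Γ(μ_t))·Γ(Λ(i)+μ_t+q)·(c+r)^{−(Λ(i)+μ_t+q)}·
  ₂F₁(Λ(i), Λ(i)+μ_t+q; Λ(i)+μ_t; −(Θ−r)/(c+r))`. -/
def interfSum (α Θ : ℝ) (N M : ℕ) (ζ : ℕ → ℝ) (μt r : ℝ) (q : ℕ) (c : ℝ) : ℝ :=
  ∑ i : Fin M → Fin (N + 1),
    Ccoef α ζ M (toIdx i) * (r ^ μt * betaFn μt (ΛIdx M (toIdx i)) / Real.Gamma μt) *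
      Real.Gamma ((ΛIdx M (toIdx i) : ℝ) + μt + q) *
      (c + r) ^ (-((ΛIdx M (toIdx i) : ℝ) + μt + q)) *
      twoF1 (ΛIdx M (toIdx i)) ((ΛIdx M (toIdx i) : ℝ) + μt + q) ((ΛIdx M (toIdx i) : ℝ) + μt)
        (-(Θ - r) / (c + r))



section SatCor3Aux

open Set


open Set

lemma lint_rpow {m : ℝ} (hm : 0 < m) {c : ℝ} (hc : 0 ≤ c) {τ : ℝ} (hτ : 0 < τ) :
    ∫⁻ x in Set.Ioo (0:ℝ) τ, ENNReal.ofReal (c * x ^ (m - 1)) =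
      ENNReal.ofReal (c * τ ^ m / m) := by
  have hInt : IntervalIntegrable (fun x : ℝ => x ^ (m - 1)) volume 0 τ :=
    intervalIntegral.intervalIntegrable_rpow' (by linarith)
  have hIntOn : IntegrableOn (fun x : ℝ => c * x ^ (m - 1)) (Set.Ioo 0 τ) volume := by
    exact ((hInt.1.mono_set Set.Ioo_subset_Ioc_self).const_mul c)
  rw [← MeasureTheory.ofReal_integral_eq_lintegral_ofReal hIntOn ?_]
  · congr 1
    rw [MeasureTheory.setIntegral_congr_set MeasureTheory.Ioo_ae_eq_Ioc,
      ← intervalIntegral.integral_of_le hτ.le]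
    rw [intervalIntegral.integral_const_mul, integral_rpow (Or.inl (by linarith))]
    rw [sub_add_cancel, Real.zero_rpow hm.ne']
    ring
  · filter_upwards [ae_restrict_mem measurableSet_Ioo] with x hx
    exact mul_nonneg hc (Real.rpow_nonneg hx.1.le _)

lemma wd_Iio {f : ℝ → ℝ} (hf0 : ∀ x < (0:ℝ), f x = 0) {τ : ℝ} (hτ : 0 < τ) :
    (volume.withDensity (fun x => ENNReal.ofReal (f x))) (Set.Iio τ)
      = ∫⁻ x in Set.Ioo 0 τ, ENNReal.ofReal (f x) := by
  rw [withDensity_apply _ measurableSet_Iio]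
  rw [show Set.Iio τ = Set.Iio 0 ∪ Set.Ico 0 τ from
    (Set.Iio_union_Ico_eq_Iio hτ.le).symm]
  rw [lintegral_union measurableSet_Ico (by
    rw [Set.disjoint_left]; rintro x hx hx2; exact absurd hx2.1 (not_le.2 hx))]
  have h1 : ∫⁻ x in Set.Iio (0:ℝ), ENNReal.ofReal (f x) = 0 := by
    rw [setLIntegral_congr_fun measurableSet_Iio
      (fun x hx => by rw [hf0 x hx, ENNReal.ofReal_zero]), lintegral_zero]
  rw [h1, zero_add, setLIntegral_congr (MeasureTheory.Ioo_ae_eq_Ico (a := (0:ℝ)) (b := τ)).symm]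

lemma measurable_gammaPDF (a b : ℝ) : Measurable (_root_.gammaPDF a b) := by
  unfold _root_.gammaPDF
  refine Measurable.ite (measurableSet_le measurable_const measurable_id) ?_ measurable_const
  fun_prop

lemma measurable_srPDF (α Θ : ℝ) (N : ℕ) (ζ : ℕ → ℝ) : Measurable (srPDF α Θ N ζ) := by
  unfold srPDF
  refine Measurable.ite (measurableSet_le measurable_const measurable_id) ?_ measurable_const
  fun_prop

lemma srPDF_neg {α Θ : ℝ} {N : ℕ} {ζ : ℕ → ℝ} : ∀ x < (0:ℝ), srPDF α Θ N ζ x = 0 :=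
  fun x hx => if_neg (not_le.2 hx)

lemma gammaPDF_neg {a b : ℝ} : ∀ x < (0:ℝ), _root_.gammaPDF a b x = 0 :=
  fun x hx => if_neg (not_le.2 hx)

/-- On `(0, τ]` with `τ ≤ 1`, the SR pdf is bounded by `α·Σ|ζκ|`. -/
lemma srPDF_le {α Θ : ℝ} (hα : 0 < α) (hΘ : 0 < Θ) {N : ℕ} {ζ : ℕ → ℝ} {x : ℝ}
    (hx0 : 0 ≤ x) (hx1 : x ≤ 1) :
    srPDF α Θ N ζ x ≤ α * ∑ κ ∈ Finset.range (N + 1), |ζ κ| := by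
  rw [srPDF, if_pos hx0]
  refine mul_le_mul_of_nonneg_left ?_ hα.le
  refine Finset.sum_le_sum fun κ _ => ?_
  calc ζ κ * x ^ κ * Real.exp (-Θ * x) ≤ |ζ κ * x ^ κ * Real.exp (-Θ * x)| := le_abs_self _
    _ = |ζ κ| * (x ^ κ * Real.exp (-Θ * x)) := by
        rw [abs_mul, abs_mul, abs_of_nonneg (pow_nonneg hx0 κ),
          abs_of_nonneg (Real.exp_nonneg _), mul_assoc]
    _ ≤ |ζ κ| * 1 := by
        refine mul_le_mul_of_nonneg_left ?_ (abs_nonneg _)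
        have h1 : x ^ κ ≤ 1 := pow_le_one₀ hx0 hx1
        have h2 : Real.exp (-Θ * x) ≤ 1 := by
          rw [Real.exp_le_one_iff]
          nlinarith
        nlinarith [pow_nonneg hx0 κ, Real.exp_nonneg (-Θ * x)]
    _ = |ζ κ| := mul_one _

/-- CDF bound for the SR density on `(0,1]`. -/
lemma sr_cdf_le {α Θ : ℝ} (hα : 0 < α) (hΘ : 0 < Θ) {N : ℕ} {ζ : ℕ → ℝ} {τ : ℝ}
    (hτ0 : 0 < τ) (hτ1 : τ ≤ 1) :
    (volume.withDensity (fun x => ENNReal.ofReal (srPDF α Θ N ζ x))) (Set.Iio τ)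
      ≤ ENNReal.ofReal ((α * ∑ κ ∈ Finset.range (N + 1), |ζ κ|) * τ) := by
  set A := α * ∑ κ ∈ Finset.range (N + 1), |ζ κ| with hA
  rw [wd_Iio srPDF_neg hτ0]
  calc ∫⁻ x in Set.Ioo 0 τ, ENNReal.ofReal (srPDF α Θ N ζ x)
      ≤ ∫⁻ _x in Set.Ioo 0 τ, ENNReal.ofReal A := by
        refine setLIntegral_mono measurable_const fun x hx => ?_
        exact ENNReal.ofReal_le_ofReal (srPDF_le hα hΘ hx.1.le (hx.2.le.trans hτ1))
    _ = ENNReal.ofReal A * volume (Set.Ioo 0 τ) := setLIntegral_const _ _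
    _ = ENNReal.ofReal (A * τ) := by
        rw [Real.volume_Ioo, sub_zero, ← ENNReal.ofReal_mul]
        positivity

/-- Gamma CDF upper bound. -/
lemma gamma_cdf_le {m b : ℝ} (hm : 0 < m) (hb : 0 < b) {τ : ℝ} (hτ : 0 < τ) :
    (volume.withDensity (fun x => ENNReal.ofReal (_root_.gammaPDF m b x))) (Set.Iio τ)
      ≤ ENNReal.ofReal (b ^ m / Real.Gamma m * τ ^ m / m) := by
  have hΓ : 0 < Real.Gamma m := Real.Gamma_pos_of_pos hm
  rw [wd_Iio gammaPDF_neg hτ, ← lint_rpow hm (c := b ^ m / Real.Gamma m) (by positivity) hτ]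
  refine setLIntegral_mono (by fun_prop) fun x hx => ?_
  refine ENNReal.ofReal_le_ofReal ?_
  rw [_root_.gammaPDF, if_pos hx.1.le]
  rw [div_eq_mul_inv, div_eq_mul_inv]
  have h2 : Real.exp (-b * x) ≤ 1 := by
    rw [Real.exp_le_one_iff]; nlinarith [hx.1]
  have h3 : (0:ℝ) ≤ x ^ (m-1) := Real.rpow_nonneg hx.1.le _
  have h4 : (0:ℝ) ≤ b ^ m := Real.rpow_nonneg hb.le _
  calc b ^ m * x ^ (m-1) * Real.exp (-b*x) * (Real.Gamma m)⁻¹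
      ≤ b ^ m * x ^ (m-1) * 1 * (Real.Gamma m)⁻¹ := by
        have : (0:ℝ) ≤ (Real.Gamma m)⁻¹ := by positivity
        exact mul_le_mul_of_nonneg_right
          (mul_le_mul_of_nonneg_left h2 (mul_nonneg h4 h3)) this
    _ = b ^ m * (Real.Gamma m)⁻¹ * x ^ (m-1) := by ring
  -- need: ≤ b ^ m * Real.Gamma m⁻¹ * x ^ (m-1)  matches

/-- Gamma CDF lower bound. -/
lemma gamma_cdf_ge {m b : ℝ} (hm : 0 < m) (hb : 0 < b) {τ : ℝ} (hτ : 0 < τ) :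
    ENNReal.ofReal (Real.exp (-b * τ) * (b ^ m / Real.Gamma m) * τ ^ m / m)
      ≤ (volume.withDensity (fun x => ENNReal.ofReal (_root_.gammaPDF m b x))) (Set.Iio τ) := by
  have hΓ : 0 < Real.Gamma m := Real.Gamma_pos_of_pos hm
  rw [wd_Iio gammaPDF_neg hτ]
  have h := lint_rpow hm (c := Real.exp (-b * τ) * (b ^ m / Real.Gamma m)) (by positivity) hτ
  rw [← h]
  refine setLIntegral_mono (ENNReal.measurable_ofReal.comp (measurable_gammaPDF m b))
    fun x hx => ?_
  refine ENNReal.ofReal_le_ofReal ?_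
  rw [_root_.gammaPDF, if_pos hx.1.le]
  have h2 : Real.exp (-b * τ) ≤ Real.exp (-b * x) := by
    apply Real.exp_le_exp.2; nlinarith [hx.2]
  have h3 : (0:ℝ) ≤ x ^ (m-1) := Real.rpow_nonneg hx.1.le _
  have h4 : (0:ℝ) ≤ b ^ m := Real.rpow_nonneg hb.le _
  calc Real.exp (-b * τ) * (b ^ m / Real.Gamma m) * x ^ (m-1)
      ≤ Real.exp (-b * x) * (b ^ m / Real.Gamma m) * x ^ (m-1) := by
        have : (0:ℝ) ≤ b ^ m / Real.Gamma m := by positivity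
        nlinarith [mul_nonneg this h3]
    _ = b ^ m * x ^ (m-1) * Real.exp (-b * x) / Real.Gamma m := by ring


lemma rpow_tendsto_zero {p : ℝ} (hp : 0 < p) :
    Tendsto (fun τ : ℝ => τ ^ p) (nhdsWithin 0 (Set.Ioi 0)) (nhds 0) := by
  have := (Real.continuousAt_rpow_const 0 p (Or.inr hp.le)).tendsto
  rw [Real.zero_rpow hp.ne'] at this
  exact this.mono_left nhdsWithin_le_nhds

/-- generic squeeze ratio: if `0 ≤ F τ ≤ A·τ` on `(0,1]` then `F τ / τ^m → 0` for `m<1`. -/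
lemma ratio_tendsto_zero {F : ℝ → ℝ} {A m : ℝ} (hm0 : 0 < m) (hm1 : m < 1)
    (h : ∀ τ : ℝ, 0 < τ → τ ≤ 1 → 0 ≤ F τ ∧ F τ ≤ A * τ) :
    Tendsto (fun τ => F τ / τ ^ m) (nhdsWithin 0 (Set.Ioi 0)) (nhds 0) := by
  have hupper : Tendsto (fun τ : ℝ => A * τ ^ (1 - m)) (nhdsWithin 0 (Set.Ioi 0)) (nhds 0) := by
    have := (rpow_tendsto_zero (by linarith : (0:ℝ) < 1 - m)).const_mul A
    simpa using this
  have hmem : Set.Ioo (0:ℝ) 1 ∈ nhdsWithin (0:ℝ) (Set.Ioi 0) :=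
    Ioo_mem_nhdsGT_of_mem (by norm_num)
  refine tendsto_of_tendsto_of_tendsto_of_le_of_le' tendsto_const_nhds hupper ?_ ?_
  · filter_upwards [hmem] with τ hτ
    exact div_nonneg (h τ hτ.1 hτ.2.le).1 (Real.rpow_nonneg hτ.1.le _)
  · filter_upwards [hmem] with τ hτ
    have hτ0 := hτ.1
    have hpow : (0:ℝ) < τ ^ m := Real.rpow_pos_of_pos hτ0 m
    rw [div_le_iff₀ hpow]
    have : A * τ ^ (1 - m) * τ ^ m = A * τ := by
      rw [mul_assoc, ← Real.rpow_add hτ0]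
      norm_num
    rw [this]
    exact (h τ hτ0 hτ.2.le).2


/-- Gamma CDF ratio limit. -/
lemma gamma_ratio_tendsto {m b : ℝ} (hm : 0 < m) (hb : 0 < b) :
    Tendsto (fun τ : ℝ =>
        ((volume.withDensity fun x => ENNReal.ofReal (_root_.gammaPDF m b x)) (Set.Iio τ)).toReal
          / τ ^ m)
      (nhdsWithin 0 (Set.Ioi 0)) (nhds (b ^ m / Real.Gamma (m + 1))) := by
  have hΓ : 0 < Real.Gamma m := Real.Gamma_pos_of_pos hm
  set ν := volume.withDensity fun x => ENNReal.ofReal (_root_.gammaPDF m b x) with hν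
  set c := b ^ m / Real.Gamma m with hc
  have hc0 : 0 < c := by positivity
  have hlim : b ^ m / Real.Gamma (m + 1) = c / m := by
    rw [Real.Gamma_add_one hm.ne', hc]
    rw [div_div]
    ring_nf
  rw [hlim]
  have hlower : Tendsto (fun τ : ℝ => Real.exp (-b * τ) * (c / m))
      (nhdsWithin 0 (Set.Ioi 0)) (nhds (c / m)) := by
    have h1 : Tendsto (fun τ : ℝ => Real.exp (-b * τ)) (nhds 0) (nhds 1) := by
      have : Continuous fun τ : ℝ => Real.exp (-b * τ) := by fun_prop
      simpa using this.tendsto 0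
    simpa using (h1.mono_left nhdsWithin_le_nhds).mul_const (c / m)
  refine tendsto_of_tendsto_of_tendsto_of_le_of_le' hlower tendsto_const_nhds ?_ ?_
  · filter_upwards [self_mem_nhdsWithin] with τ (hτ : 0 < τ)
    have hpow : (0:ℝ) < τ ^ m := Real.rpow_pos_of_pos hτ m
    have hge := gamma_cdf_ge hm hb hτ
    have hle := gamma_cdf_le hm hb hτ
    have hne : ν (Set.Iio τ) ≠ ⊤ := ne_top_of_le_ne_top ENNReal.ofReal_ne_top hle
    have hlb : Real.exp (-b * τ) * c * τ ^ m / m ≤ (ν (Set.Iio τ)).toReal := by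
      have := ENNReal.toReal_mono hne hge
      rwa [ENNReal.toReal_ofReal (by positivity)] at this
    rw [le_div_iff₀ hpow]
    calc Real.exp (-b * τ) * (c / m) * τ ^ m = Real.exp (-b * τ) * c * τ ^ m / m := by ring
      _ ≤ _ := hlb
  · filter_upwards [self_mem_nhdsWithin] with τ (hτ : 0 < τ)
    have hpow : (0:ℝ) < τ ^ m := Real.rpow_pos_of_pos hτ m
    have hle := gamma_cdf_le hm hb hτ
    have hub : (ν (Set.Iio τ)).toReal ≤ c * τ ^ m / m :=
      ENNReal.toReal_le_of_le_ofReal (by positivity) hle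
    rw [div_le_iff₀ hpow]
    calc (ν (Set.Iio τ)).toReal ≤ c * τ ^ m / m := hub
      _ = c / m * τ ^ m := by ring


/-- squeeze: `F → 0` at `0+` given a linear bound on `(0,1]`. -/
lemma tendsto_zero_of_linbound {F : ℝ → ℝ} {A : ℝ}
    (h : ∀ τ : ℝ, 0 < τ → τ ≤ 1 → 0 ≤ F τ ∧ F τ ≤ A * τ) :
    Tendsto F (nhdsWithin 0 (Set.Ioi 0)) (nhds 0) := by
  have hmem : Set.Ioo (0:ℝ) 1 ∈ nhdsWithin (0:ℝ) (Set.Ioi 0) :=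
    Ioo_mem_nhdsGT_of_mem (by norm_num)
  have hupper : Tendsto (fun τ : ℝ => A * τ) (nhdsWithin 0 (Set.Ioi 0)) (nhds 0) := by
    have : Tendsto (fun τ : ℝ => A * τ) (nhds 0) (nhds (A * 0)) :=
      (continuous_const.mul continuous_id).tendsto 0
    simpa using this.mono_left nhdsWithin_le_nhds
  refine tendsto_of_tendsto_of_tendsto_of_le_of_le' tendsto_const_nhds hupper ?_ ?_
  · filter_upwards [hmem] with τ hτ; exact (h τ hτ.1 hτ.2.le).1
  · filter_upwards [hmem] with τ hτ; exact (h τ hτ.1 hτ.2.le).2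

/-- A `withDensity` measure of a density vanishing on negatives gives no mass to `Iio 0`. -/
lemma wd_Iio0 {f : ℝ → ℝ} (hf0 : ∀ x < (0:ℝ), f x = 0) :
    (volume.withDensity (fun x => ENNReal.ofReal (f x))) (Set.Iio 0) = 0 := by
  rw [withDensity_apply _ measurableSet_Iio,
    setLIntegral_congr_fun measurableSet_Iio
      (fun x hx => by rw [hf0 x hx, ENNReal.ofReal_zero]), lintegral_zero]


lemma factor_lemma {Ω : Type*} [MeasurableSpace Ω] (P : Measure Ω) [IsProbabilityMeasure P]
    {K M : ℕ}
    (Z V : Fin K → Ω → ℝ) (Λi : Fin M → Ω → ℝ) (T : Ω → ℝ)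
    (hmZ : ∀ k, Measurable (Z k)) (hmV : ∀ k, Measurable (V k))
    (hmΛ : ∀ j, Measurable (Λi j)) (hmT : Measurable T)
    (hIndep : iIndepFun
      (Sum.elim (Sum.elim Z V) (Sum.elim Λi (fun _ : Unit => T)) :
        (Fin K ⊕ Fin K) ⊕ (Fin M ⊕ Unit) → Ω → ℝ) P)
    (τ : ℝ) :
    P (⋂ k, (Z k ⁻¹' Set.Iio τ ∪ V k ⁻¹' Set.Iio τ)) =
      ∏ k : Fin K,
        (P (Z k ⁻¹' Set.Iio τ) + P (Z k ⁻¹' Set.Ici τ) * P (V k ⁻¹' Set.Iio τ)) := by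
  classical
  set f := (Sum.elim (Sum.elim Z V) (Sum.elim Λi (fun _ : Unit => T)) :
      (Fin K ⊕ Fin K) ⊕ (Fin M ⊕ Unit) → Ω → ℝ) with hf
  -- the measurable sets attached to a subset t
  let sets : Finset (Fin K) → ((Fin K ⊕ Fin K) ⊕ (Fin M ⊕ Unit)) → Set ℝ := fun t i =>
    match i with
    | Sum.inl (Sum.inl k) => if k ∈ t then Set.Iio τ else Set.Ici τ
    | Sum.inl (Sum.inr _) => Set.Iio τ
    | Sum.inr _ => Set.univ
  let S : Finset (Fin K) → Finset ((Fin K ⊕ Fin K) ⊕ (Fin M ⊕ Unit)) := fun t =>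
    Finset.univ.image (fun k : Fin K => Sum.inl (Sum.inl k)) ∪
      (Finset.univ \ t).image (fun k : Fin K => Sum.inl (Sum.inr k))
  let term : Finset (Fin K) → Set Ω := fun t => ⋂ i ∈ S t, f i ⁻¹' sets t i
  have hsets_meas : ∀ t i, MeasurableSet (sets t i) := by
    rintro t (⟨k|k⟩|j)
    · dsimp only [sets]; split <;> measurability
    · exact measurableSet_Iio
    · exact MeasurableSet.univ
  -- membership characterization
  have hmem : ∀ t ω, ω ∈ term t ↔
      ((∀ k, k ∈ t → Z k ω < τ) ∧ ∀ k, k ∉ t → (τ ≤ Z k ω ∧ V k ω < τ)) := by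
    intro t ω
    simp only [term, S, Set.mem_iInter, Finset.mem_union, Finset.mem_image, Finset.mem_univ,
      true_and, Finset.mem_sdiff]
    constructor
    · intro h
      constructor
      · intro k hk
        have := h (Sum.inl (Sum.inl k)) (Or.inl ⟨k, rfl⟩)
        simpa [f, sets, hk] using this
      · intro k hk
        have h1 := h (Sum.inl (Sum.inl k)) (Or.inl ⟨k, rfl⟩)
        have h2 := h (Sum.inl (Sum.inr k)) (Or.inr ⟨k, by simpa using hk, rfl⟩)
        constructor
        · simpa [f, sets, hk] using h1
        · simpa [f, sets] using h2
    · rintro ⟨h1, h2⟩ i hi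
      rcases hi with ⟨k, rfl⟩ | ⟨k, hk, rfl⟩
      · by_cases hk : k ∈ t
        · simpa [f, sets, hk] using h1 k hk
        · simpa [f, sets, hk] using (h2 k hk).1
      · simpa [f, sets] using (h2 k (by simpa using hk)).2
  -- decomposition
  have hdecomp : (⋂ k, (Z k ⁻¹' Set.Iio τ ∪ V k ⁻¹' Set.Iio τ)) =
      ⋃ t ∈ (Finset.univ : Finset (Fin K)).powerset, term t := by
    ext ω
    simp only [Set.mem_iInter, Set.mem_iUnion, Set.mem_union, Set.mem_preimage, Set.mem_Iio]
    constructor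
    · intro h
      refine ⟨Finset.univ.filter (fun k => Z k ω < τ), Finset.mem_powerset.2 (Finset.subset_univ _),
        (hmem _ ω).2 ⟨?_, ?_⟩⟩
      · intro k hk; simpa using (Finset.mem_filter.1 hk).2
      · intro k hk
        have hz : ¬ Z k ω < τ := by simpa using hk
        exact ⟨not_lt.1 hz, (h k).resolve_left hz⟩
    · rintro ⟨t, _, hω⟩ k
      rw [hmem] at hω
      by_cases hk : k ∈ t
      · exact Or.inl (hω.1 k hk)
      · exact Or.inr (hω.2 k hk).2
  -- pairwise disjointness
  have hdisj : ((Finset.univ : Finset (Fin K)).powerset : Set (Finset (Fin K))).PairwiseDisjoint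
      term := by
    intro t _ t' _ hne
    rw [Function.onFun, Set.disjoint_left]
    intro ω hω hω'
    rw [hmem] at hω hω'
    have : ∃ k, (k ∈ t ∧ k ∉ t') ∨ (k ∉ t ∧ k ∈ t') := by
      by_contra hc
      push_neg at hc
      exact hne (Finset.ext fun k => by
        have := hc k; tauto)
    obtain ⟨k, hk | hk⟩ := this
    · exact absurd (hω.1 k hk.1) (not_lt.2 (hω'.2 k hk.2).1)
    · exact absurd (hω'.1 k hk.2) (not_lt.2 (hω.2 k hk.1).1)
  -- measurability of each term
  have hterm_meas : ∀ t ∈ (Finset.univ : Finset (Fin K)).powerset, MeasurableSet (term t) := by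
    intro t _
    refine Set.Finite.measurableSet_biInter (Finset.finite_toSet _) fun i _ => ?_
    have hfm : Measurable (f i) := by
      rcases i with (⟨k|k⟩|⟨j|u⟩)
      · exact hmZ k
      · exact hmV k
      · exact hmΛ j
      · exact hmT
    exact hfm (hsets_meas t i)
  -- measure of each term
  have hterm : ∀ t ∈ (Finset.univ : Finset (Fin K)).powerset,
      P (term t) = (∏ k ∈ t, P (Z k ⁻¹' Set.Iio τ)) *
        ∏ k ∈ Finset.univ \ t, (P (Z k ⁻¹' Set.Ici τ) * P (V k ⁻¹' Set.Iio τ)) := by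
    intro t _
    have := hIndep.measure_inter_preimage_eq_mul (S t) (sets := sets t)
      (fun i _ => hsets_meas t i)
    rw [show term t = ⋂ i ∈ S t, f i ⁻¹' sets t i from rfl, this]
    have hdisjS : Disjoint (Finset.univ.image (fun k : Fin K => Sum.inl (Sum.inl k) :
          Fin K → (Fin K ⊕ Fin K) ⊕ (Fin M ⊕ Unit)))
        ((Finset.univ \ t).image (fun k : Fin K => Sum.inl (Sum.inr k))) := by
      rw [Finset.disjoint_left]
      rintro i hi hi'
      simp only [Finset.mem_image] at hi hi'
      obtain ⟨k, _, rfl⟩ := hi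
      obtain ⟨k', _, h⟩ := hi'
      simp at h
    rw [show S t = _ ∪ _ from rfl, Finset.prod_union hdisjS]
    rw [Finset.prod_image (fun a _ b _ h => by simpa using h),
      Finset.prod_image (fun a _ b _ h => by simpa using h)]
    have h1 : ∏ k : Fin K, P (f (Sum.inl (Sum.inl k)) ⁻¹' sets t (Sum.inl (Sum.inl k)))
        = (∏ k ∈ t, P (Z k ⁻¹' Set.Iio τ)) * ∏ k ∈ Finset.univ \ t, P (Z k ⁻¹' Set.Ici τ) := by
      have : ∀ k : Fin K, P (f (Sum.inl (Sum.inl k)) ⁻¹' sets t (Sum.inl (Sum.inl k)))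
          = if k ∈ t then P (Z k ⁻¹' Set.Iio τ) else P (Z k ⁻¹' Set.Ici τ) := by
        intro k
        by_cases hk : k ∈ t <;> simp [f, sets, hk]
      rw [Finset.prod_congr rfl (fun k _ => this k), Finset.prod_ite]
      congr 1
      · apply Finset.prod_congr _ (fun _ _ => rfl)
        ext k; simp
      · apply Finset.prod_congr _ (fun _ _ => rfl)
        ext k; simp
    have h2 : ∏ k ∈ Finset.univ \ t, P (f (Sum.inl (Sum.inr k)) ⁻¹' sets t (Sum.inl (Sum.inr k)))
        = ∏ k ∈ Finset.univ \ t, P (V k ⁻¹' Set.Iio τ) := by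
      apply Finset.prod_congr rfl
      intro k _
      simp [f, sets]
    rw [h1, h2, Finset.prod_mul_distrib]
    ring
  -- put it together
  rw [hdecomp, measure_biUnion_finset hdisj hterm_meas]
  rw [Finset.sum_congr rfl hterm]
  rw [Finset.prod_add]


lemma cond_lemma {Ω : Type*} [MeasurableSpace Ω] (P : Measure Ω) [IsProbabilityMeasure P]
    {K M : ℕ} (Z V : Fin K → Ω → ℝ) (Λi : Fin M → Ω → ℝ) (T W : Ω → ℝ)
    (hmZ : ∀ k, Measurable (Z k)) (hmV : ∀ k, Measurable (V k))
    (hmΛ : ∀ j, Measurable (Λi j)) (hmT : Measurable T)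
    (hW : W = fun ω => (∑ j, Λi j ω) + T ω)
    (hIndep : iIndepFun
      (Sum.elim (Sum.elim Z V) (Sum.elim Λi (fun _ : Unit => T)) :
        (Fin K ⊕ Fin K) ⊕ (Fin M ⊕ Unit) → Ω → ℝ) P)
    {Sset : Set (((Fin K ⊕ Fin K) → ℝ) × ℝ)} (hSset : MeasurableSet Sset)
    (g : ℝ → ENNReal) (hg : Measurable g)
    (hgP : ∀ w : ℝ, P ((fun ω (i : Fin K ⊕ Fin K) => Sum.elim Z V i ω) ⁻¹'
        {p | (p, w) ∈ Sset}) = g w) :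
    P ((fun ω => ((fun i : Fin K ⊕ Fin K => Sum.elim Z V i ω), W ω)) ⁻¹' Sset)
      = ∫⁻ ω, g (W ω) ∂P := by
  classical
  set f := (Sum.elim (Sum.elim Z V) (Sum.elim Λi (fun _ : Unit => T)) :
      (Fin K ⊕ Fin K) ⊕ (Fin M ⊕ Unit) → Ω → ℝ) with hf
  have hfm : ∀ i, Measurable (f i) := by
    rintro (⟨k|k⟩|⟨j|u⟩)
    · exact hmZ k
    · exact hmV k
    · exact hmΛ j
    · exact hmT
  set X : Ω → (Fin K ⊕ Fin K) → ℝ := fun ω i => Sum.elim Z V i ω with hX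
  have hmX : Measurable X := measurable_pi_lambda _ fun i => by
    rcases i with k | k
    · exact hmZ k
    · exact hmV k
  have hmW : Measurable W := by
    rw [hW]; exact (Finset.measurable_sum _ fun j _ => hmΛ j).add hmT
  -- independence of X and W
  have hXW : IndepFun X W P := by
    set S1 : Finset ((Fin K ⊕ Fin K) ⊕ (Fin M ⊕ Unit)) :=
      Finset.univ.image Sum.inl with hS1
    set S2 : Finset ((Fin K ⊕ Fin K) ⊕ (Fin M ⊕ Unit)) :=
      Finset.univ.image Sum.inr with hS2
    have hdisj : Disjoint S1 S2 := by
      rw [Finset.disjoint_left]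
      rintro i hi hi'
      simp only [hS1, hS2, Finset.mem_image, Finset.mem_univ, true_and] at hi hi'
      obtain ⟨a, rfl⟩ := hi
      obtain ⟨b, h⟩ := hi'
      simp at h
    have base := hIndep.indepFun_finset S1 S2 hdisj hfm
    have hmem1 : ∀ i : Fin K ⊕ Fin K, Sum.inl i ∈ S1 := fun i => by
      simp [hS1]
    have hmem2 : ∀ j : Fin M ⊕ Unit, Sum.inr j ∈ S2 := fun j => by
      simp [hS2]
    let φ : ((i : S1) → ℝ) → ((Fin K ⊕ Fin K) → ℝ) := fun v i => v ⟨Sum.inl i, hmem1 i⟩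
    let ψ : ((i : S2) → ℝ) → ℝ := fun v =>
      (∑ j : Fin M, v ⟨Sum.inr (Sum.inl j), hmem2 _⟩) + v ⟨Sum.inr (Sum.inr ()), hmem2 _⟩
    have hφ : Measurable φ := measurable_pi_lambda _ fun i => measurable_pi_apply _
    have hψ : Measurable ψ := by
      apply Measurable.add
      · exact Finset.measurable_sum _ fun j _ => measurable_pi_apply _
      · exact measurable_pi_apply _
    have := base.comp hφ hψ
    have hXeq : (φ ∘ fun a (i : S1) => f i a) = X := by
      funext ω; funext i; rfl
    have hWeq : (ψ ∘ fun a (i : S2) => f i a) = W := by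
      funext ω
      simp only [Function.comp_apply, ψ, hW]
      rfl
    rwa [hXeq, hWeq] at this
  haveI : IsProbabilityMeasure (P.map X) := Measure.isProbabilityMeasure_map hmX.aemeasurable
  haveI : IsProbabilityMeasure (P.map W) := Measure.isProbabilityMeasure_map hmW.aemeasurable
  have hpair : Measurable fun ω => (X ω, W ω) := hmX.prodMk hmW
  rw [show ((fun ω => ((fun i : Fin K ⊕ Fin K => Sum.elim Z V i ω), W ω)) ⁻¹' Sset)
      = (fun ω => (X ω, W ω)) ⁻¹' Sset from rfl]
  rw [← Measure.map_apply hpair hSset]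
  rw [(indepFun_iff_map_prod_eq_prod_map_map hmX.aemeasurable hmW.aemeasurable).mp hXW]
  rw [Measure.prod_apply_symm hSset, ← lintegral_map hg hmW]
  refine lintegral_congr fun w => ?_
  rw [Measure.map_apply hmX (hSset.preimage (measurable_prodMk_right))]
  exact hgP w

end SatCor3Aux

/-- Corollary 3 of the paper, Case 2 with `m_cb < 1`: for terrestrial
Nakagami parameter `0 < m < 1` the satellite network achieves diversity order `m·K`:
`lim_{η→∞} η^{mK}·Pr[max_k min(ηZ_k, ηV_k) < γ̃(1+W_c)]
  = (1/Γ(m+1))^K·(mγ̃/Ω)^{mK}·E[(1+W_c)^{mK}]`. -/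
theorem satellite_asymptotic_case2_fixed_interference
    {Ω : Type*} [MeasurableSpace Ω] (P : Measure Ω) [IsProbabilityMeasure P]
    (K : ℕ) (hK : 1 ≤ K) (γ : ℝ) (hγ : 0 < γ)
    (α Θa : ℝ) (hα : 0 < α) (hΘa : 0 < Θa) (Na : ℕ) (ζa : ℕ → ℝ) (hζa0 : ζa 0 = 1)
    (m : ℝ) (hm0 : 0 < m) (hm1 : m < 1) (Ωb : ℝ) (hΩb : 0 < Ωb)
    (M : ℕ) (hM : 1 ≤ M) (αs Θs : ℝ) (hαs : 0 < αs) (hΘs : 0 < Θs) (Ns : ℕ) (ζs : ℕ → ℝ)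
    (μt r : ℝ) (hμt : 0 < μt) (hr : 0 < r)
    (Z V : Fin K → Ω → ℝ) (Λi : Fin M → Ω → ℝ) (T W : Ω → ℝ)
    (hmZ : ∀ k, Measurable (Z k)) (hmV : ∀ k, Measurable (V k))
    (hmΛ : ∀ j, Measurable (Λi j)) (hmT : Measurable T)
    (hdZ : ∀ k, HasDensity P (Z k) (srPDF α Θa Na ζa))
    (hdV : ∀ k, HasDensity P (V k) (gammaPDF m (m / Ωb)))
    (hdΛ : ∀ j, HasDensity P (Λi j) (srPDF αs Θs Ns ζs))
    (hdT : HasDensity P T (gammaPDF μt r))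
    (hW : W = fun ω => (∑ j, Λi j ω) + T ω)
    (hIndep : iIndepFun
      (Sum.elim (Sum.elim Z V) (Sum.elim Λi (fun _ : Unit => T)) :
        (Fin K ⊕ Fin K) ⊕ (Fin M ⊕ Unit) → Ω → ℝ) P)
    (hInt : Integrable (fun ω => (1 + W ω) ^ (m * K)) P) :
    Filter.Tendsto (fun η : ℝ => η ^ (m * K) *
        (P {ω | ∀ k, min (η * Z k ω) (η * V k ω) < γ * (1 + W ω)}).toReal)
      Filter.atTop
      (nhds ((1 / Real.Gamma (m + 1)) ^ K * (m * γ / Ωb) ^ (m * K) *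
        ∫ ω, (1 + W ω) ^ (m * K) ∂P)) := by
  classical
  have hK0 : 0 < K := hK
  set b : ℝ := m / Ωb with hbdef
  have hb0 : 0 < b := by positivity
  set A : ℝ := α * ∑ κ ∈ Finset.range (Na + 1), |ζa κ| with hAdef
  have hA0 : 0 ≤ A := by positivity
  have hΓm : 0 < Real.Gamma m := Real.Gamma_pos_of_pos hm0
  set CV : ℝ := b ^ m / Real.Gamma m / m with hCVdef
  have hCV0 : 0 ≤ CV := by positivity
  set C : ℝ := max A 1 + CV with hCdef
  have hC0 : 0 ≤ C := by
    have : (1:ℝ) ≤ max A 1 := le_max_right _ _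
    linarith
  have hΓm1 : 0 < Real.Gamma (m + 1) := Real.Gamma_pos_of_pos (by linarith)
  set L : ℝ := b ^ m / Real.Gamma (m + 1) with hLdef
  have hbm : (0:ℝ) < b ^ m := Real.rpow_pos_of_pos hb0 m
  have hL0 : 0 < L := by rw [hLdef]; positivity
  set νZ : Measure ℝ := volume.withDensity (fun x => ENNReal.ofReal (srPDF α Θa Na ζa x))
    with hνZ
  set νV : Measure ℝ := volume.withDensity (fun x => ENNReal.ofReal (gammaPDF m b x)) with hνV
  haveI hpZ : IsProbabilityMeasure νZ := by
    rw [hνZ, ← hdZ ⟨0, hK0⟩]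
    exact Measure.isProbabilityMeasure_map (hmZ _).aemeasurable
  haveI hpV : IsProbabilityMeasure νV := by
    rw [hνV, ← hdV ⟨0, hK0⟩]
    exact Measure.isProbabilityMeasure_map (hmV _).aemeasurable
  have hmW : Measurable W := by
    rw [hW]; exact (Finset.measurable_sum _ fun j _ => hmΛ j).add hmT
  set φ : ℝ → ENNReal := fun τ => νZ (Set.Iio τ) + νZ (Set.Ici τ) * νV (Set.Iio τ) with hφdef
  have hφ_ne_top : ∀ τ, φ τ ≠ ⊤ := by
    intro τ
    have h1 : φ τ ≤ 1 + 1 * 1 :=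
      add_le_add prob_le_one (mul_le_mul' prob_le_one prob_le_one)
    exact ne_top_of_le_ne_top (by norm_num) h1
  set FZ : ℝ → ℝ := fun τ => (νZ (Set.Iio τ)).toReal with hFZdef
  set FV : ℝ → ℝ := fun τ => (νV (Set.Iio τ)).toReal with hFVdef
  have hFZ0' : ∀ τ, 0 ≤ FZ τ := fun τ => ENNReal.toReal_nonneg
  have hFZ1 : ∀ τ, FZ τ ≤ 1 := fun τ => by
    have := ENNReal.toReal_mono ENNReal.one_ne_top (prob_le_one (μ := νZ) (s := Set.Iio τ))
    simpa using this
  have hFV0' : ∀ τ, 0 ≤ FV τ := fun τ => ENNReal.toReal_nonneg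
  have hφtoReal : ∀ τ, (φ τ).toReal = FZ τ + (1 - FZ τ) * FV τ := by
    intro τ
    have hcompl : νZ (Set.Ici τ) = 1 - νZ (Set.Iio τ) := by
      rw [← Set.compl_Iio, measure_compl measurableSet_Iio (measure_ne_top _ _), measure_univ]
    simp only [hφdef]
    rw [ENNReal.toReal_add (measure_ne_top _ _)
        (ENNReal.mul_ne_top (measure_ne_top _ _) (measure_ne_top _ _)),
      ENNReal.toReal_mul, hcompl, ENNReal.toReal_sub_of_le prob_le_one ENNReal.one_ne_top]
    simp [hFZdef, hFVdef]
  -- CDF bounds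
  have hFZle : ∀ τ : ℝ, 0 < τ → τ ≤ 1 → FZ τ ≤ A * τ := fun τ h1 h2 =>
    ENNReal.toReal_le_of_le_ofReal (by positivity) (sr_cdf_le hα hΘa h1 h2)
  have hFVle : ∀ τ : ℝ, 0 < τ → FV τ ≤ CV * τ ^ m := by
    intro τ h1
    have h := ENNReal.toReal_le_of_le_ofReal (by positivity)
      (gamma_cdf_le hm0 hb0 h1)
    calc FV τ ≤ b ^ m / Real.Gamma m * τ ^ m / m := h
      _ = CV * τ ^ m := by rw [hCVdef]; ring
  have hbound : ∀ τ : ℝ, 0 < τ → (φ τ).toReal ≤ C * τ ^ m := by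
    intro τ hτ
    rw [hφtoReal]
    have hτm : 0 < τ ^ m := Real.rpow_pos_of_pos hτ m
    have h1 : FZ τ ≤ max A 1 * τ ^ m := by
      rcases le_or_gt τ 1 with h | h
      · have hττm : τ ≤ τ ^ m := by
          calc τ = τ ^ (1:ℝ) := (Real.rpow_one τ).symm
            _ ≤ τ ^ m := Real.rpow_le_rpow_of_exponent_ge hτ h hm1.le
        calc FZ τ ≤ A * τ := hFZle τ hτ h
          _ ≤ A * τ ^ m := mul_le_mul_of_nonneg_left hττm hA0
          _ ≤ max A 1 * τ ^ m := mul_le_mul_of_nonneg_right (le_max_left A 1) hτm.le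
      · have h1τm : (1:ℝ) ≤ τ ^ m := by
          calc (1:ℝ) = 1 ^ m := (Real.one_rpow m).symm
            _ ≤ τ ^ m := Real.rpow_le_rpow zero_le_one h.le hm0.le
        calc FZ τ ≤ 1 := hFZ1 τ
          _ = 1 * 1 := (one_mul 1).symm
          _ ≤ max A 1 * τ ^ m :=
              mul_le_mul (le_max_right A 1) h1τm zero_le_one (by positivity)
    have h2 : (1 - FZ τ) * FV τ ≤ CV * τ ^ m := by
      have h3 := hFVle τ hτ
      calc (1 - FZ τ) * FV τ ≤ 1 * FV τ :=
            mul_le_mul_of_nonneg_right (by linarith [hFZ0' τ]) (hFV0' τ)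
        _ = FV τ := one_mul _
        _ ≤ CV * τ ^ m := h3
    calc FZ τ + (1 - FZ τ) * FV τ ≤ max A 1 * τ ^ m + CV * τ ^ m := add_le_add h1 h2
      _ = C * τ ^ m := by rw [hCdef]; ring
  -- limits
  have hFZbd : ∀ τ : ℝ, 0 < τ → τ ≤ 1 → 0 ≤ FZ τ ∧ FZ τ ≤ A * τ := fun τ h1 h2 =>
    ⟨hFZ0' τ, hFZle τ h1 h2⟩
  have hFZratio : Tendsto (fun τ => FZ τ / τ ^ m) (nhdsWithin 0 (Set.Ioi 0)) (nhds 0) :=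
    ratio_tendsto_zero hm0 hm1 hFZbd
  have hFZzero : Tendsto FZ (nhdsWithin 0 (Set.Ioi 0)) (nhds 0) :=
    tendsto_zero_of_linbound hFZbd
  have hFVratio : Tendsto (fun τ => FV τ / τ ^ m) (nhdsWithin 0 (Set.Ioi 0)) (nhds L) :=
    gamma_ratio_tendsto hm0 hb0
  have hφratio : Tendsto (fun τ => (φ τ).toReal / τ ^ m) (nhdsWithin 0 (Set.Ioi 0)) (nhds L) := by
    have h := hFZratio.add (((tendsto_const_nhds (x := (1:ℝ))).sub hFZzero).mul hFVratio)
    have h2 : (0:ℝ) + (1 - 0) * L = L := by ring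
    rw [h2] at h
    refine h.congr fun τ => ?_
    rw [hφtoReal]
    ring
  -- a.e. nonnegativity of W
  have hW0 : ∀ᵐ ω ∂P, 0 ≤ W ω := by
    have hΛ0 : ∀ j, ∀ᵐ ω ∂P, 0 ≤ Λi j ω := by
      intro j
      have hnull : P (Λi j ⁻¹' Set.Iio 0) = 0 := by
        rw [← Measure.map_apply (hmΛ j) measurableSet_Iio, hdΛ j,
          wd_Iio0 srPDF_neg]
      rw [MeasureTheory.ae_iff]
      convert hnull using 2
      ext ω
      simp [not_le]
    have hT0 : ∀ᵐ ω ∂P, 0 ≤ T ω := by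
      have hnull : P (T ⁻¹' Set.Iio 0) = 0 := by
        rw [← Measure.map_apply hmT measurableSet_Iio, hdT,
          wd_Iio0 gammaPDF_neg]
      rw [MeasureTheory.ae_iff]
      convert hnull using 2
      ext ω
      simp [not_le]
    have hall : ∀ᵐ ω ∂P, (∀ j, 0 ≤ Λi j ω) ∧ 0 ≤ T ω := (ae_all_iff.2 hΛ0).and hT0
    filter_upwards [hall] with ω hω
    rw [hW]
    exact add_nonneg (Finset.sum_nonneg fun j _ => hω.1 j) hω.2
  -- the family of integrands
  set Ffun : ℝ → Ω → ℝ := fun η ω => (η ^ m * (φ (γ * (1 + W ω) / η)).toReal) ^ K with hFfun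
  have hmono : ∀ η : ℝ, 0 < η → Measurable fun w : ℝ => φ (γ * (1 + w) / η) := by
    intro η hη
    have h1 : Measurable fun τ : ℝ => νZ (Set.Iio τ) :=
      Monotone.measurable fun a c hac => measure_mono (Set.Iio_subset_Iio hac)
    have h2 : Measurable fun τ : ℝ => νZ (Set.Ici τ) :=
      Antitone.measurable fun a c hac => measure_mono (Set.Ici_subset_Ici.2 hac)
    have h3 : Measurable fun τ : ℝ => νV (Set.Iio τ) :=
      Monotone.measurable fun a c hac => measure_mono (Set.Iio_subset_Iio hac)
    have haff : Measurable fun w : ℝ => γ * (1 + w) / η := by fun_prop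
    exact (h1.comp haff).add ((h2.comp haff).mul (h3.comp haff))
  -- the key identity for positive η
  have key : ∀ η : ℝ, 0 < η →
      η ^ (m * K) * (P {ω | ∀ k, min (η * Z k ω) (η * V k ω) < γ * (1 + W ω)}).toReal
        = ∫ ω, Ffun η ω ∂P := by
    intro η hη
    set Sset : Set (((Fin K ⊕ Fin K) → ℝ) × ℝ) :=
      {pw | ∀ k : Fin K, min (η * pw.1 (Sum.inl k)) (η * pw.1 (Sum.inr k)) < γ * (1 + pw.2)}
      with hSsetdef
    have hSmeas : MeasurableSet Sset := by
      have hrw : Sset = ⋂ k : Fin K, {pw : ((Fin K ⊕ Fin K) → ℝ) × ℝ |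
          min (η * pw.1 (Sum.inl k)) (η * pw.1 (Sum.inr k)) < γ * (1 + pw.2)} := by
        ext pw; simp [hSsetdef, Set.mem_iInter]
      rw [hrw]
      refine MeasurableSet.iInter fun k => ?_
      apply measurableSet_lt
      · have hm1 : Measurable fun pw : ((Fin K ⊕ Fin K) → ℝ) × ℝ => η * pw.1 (Sum.inl k) :=
          by fun_prop
        have hm2 : Measurable fun pw : ((Fin K ⊕ Fin K) → ℝ) × ℝ => η * pw.1 (Sum.inr k) :=
          by fun_prop
        exact hm1.min hm2
      · exact (measurable_const.add measurable_snd).const_mul γ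
    set g : ℝ → ENNReal := fun w => (φ (γ * (1 + w) / η)) ^ K with hgdef
    have hg : Measurable g := (hmono η hη).pow_const K
    have hgP : ∀ w : ℝ, P ((fun ω (i : Fin K ⊕ Fin K) => Sum.elim Z V i ω) ⁻¹'
        {p | (p, w) ∈ Sset}) = g w := by
      intro w
      have hiff : ∀ x : ℝ, η * x < γ * (1 + w) ↔ x < γ * (1 + w) / η := fun x => by
        rw [lt_div_iff₀ hη, mul_comm]
      have hsetEq : ((fun ω (i : Fin K ⊕ Fin K) => Sum.elim Z V i ω) ⁻¹'
            {p | (p, w) ∈ Sset})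
          = ⋂ k, (Z k ⁻¹' Set.Iio (γ * (1 + w) / η) ∪ V k ⁻¹' Set.Iio (γ * (1 + w) / η)) := by
        ext ω
        simp only [Set.mem_preimage, Set.mem_setOf_eq, hSsetdef, Set.mem_iInter, Set.mem_union,
          Set.mem_Iio, min_lt_iff, Sum.elim_inl, Sum.elim_inr]
        exact forall_congr' fun k => or_congr (hiff _) (hiff _)
      rw [hsetEq, factor_lemma P Z V Λi T hmZ hmV hmΛ hmT hIndep]
      have hfac : ∀ k : Fin K,
          P (Z k ⁻¹' Set.Iio (γ * (1 + w) / η)) +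
            P (Z k ⁻¹' Set.Ici (γ * (1 + w) / η)) * P (V k ⁻¹' Set.Iio (γ * (1 + w) / η))
          = φ (γ * (1 + w) / η) := by
        intro k
        rw [← Measure.map_apply (hmZ k) measurableSet_Iio,
          ← Measure.map_apply (hmZ k) measurableSet_Ici,
          ← Measure.map_apply (hmV k) measurableSet_Iio, hdZ k, hdV k]
      rw [Finset.prod_congr rfl fun k _ => hfac k, Finset.prod_const, Finset.card_univ,
        Fintype.card_fin]
    have hevent : {ω | ∀ k, min (η * Z k ω) (η * V k ω) < γ * (1 + W ω)}
        = (fun ω => ((fun i : Fin K ⊕ Fin K => Sum.elim Z V i ω), W ω)) ⁻¹' Sset := rfl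
    rw [hevent, cond_lemma P Z V Λi T W hmZ hmV hmΛ hmT hW hIndep hSmeas g hg hgP]
    have hfin : ∀ᵐ ω ∂P, g (W ω) < ⊤ := ae_of_all _ fun ω => by
      rw [hgdef]
      exact ENNReal.pow_lt_top (lt_top_iff_ne_top.2 (hφ_ne_top _))
    rw [← integral_toReal (f := fun ω => g (W ω)) ((hg.comp hmW).aemeasurable) hfin,
      ← integral_const_mul]
    refine integral_congr_ae (ae_of_all _ fun ω => ?_)
    simp only [hgdef, hFfun]
    rw [ENNReal.toReal_pow, mul_pow]
    congr 1
    rw [← Real.rpow_natCast (η ^ m) K, ← Real.rpow_mul hη.le]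
  -- the constant
  set const : ℝ := (1 / Real.Gamma (m + 1)) ^ K * (m * γ / Ωb) ^ (m * (K:ℝ)) with hconstdef
  have hDCT : Tendsto (fun η : ℝ => ∫ ω, Ffun η ω ∂P) atTop
      (nhds (∫ ω, const * (1 + W ω) ^ (m * (K:ℝ)) ∂P)) := by
    refine tendsto_integral_filter_of_dominated_convergence
      (fun ω => (C * (γ * (1 + W ω)) ^ m) ^ K) ?_ ?_ ?_ ?_
    · filter_upwards [eventually_gt_atTop (0:ℝ)] with η hη
      have h1 : Measurable fun ω => φ (γ * (1 + W ω) / η) := (hmono η hη).comp hmW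
      exact ((h1.ennreal_toReal.const_mul _).pow_const K).aestronglyMeasurable
    · filter_upwards [eventually_ge_atTop (1:ℝ)] with η hη
      filter_upwards [hW0] with ω hω
      have hη0 : 0 < η := lt_of_lt_of_le one_pos hη
      set c : ℝ := γ * (1 + W ω) with hc
      have hc0 : 0 < c := mul_pos hγ (by linarith)
      have hτ0 : 0 < c / η := div_pos hc0 hη0
      have h1 : (φ (c / η)).toReal ≤ C * (c / η) ^ m := hbound _ hτ0
      have hηm : (0:ℝ) < η ^ m := Real.rpow_pos_of_pos hη0 m
      have h2 : η ^ m * (φ (c / η)).toReal ≤ C * c ^ m := by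
        have hcalc : η ^ m * (C * (c / η) ^ m) = C * c ^ m := by
          rw [Real.div_rpow hc0.le hη0.le]
          field_simp
        calc η ^ m * (φ (c / η)).toReal ≤ η ^ m * (C * (c / η) ^ m) :=
            mul_le_mul_of_nonneg_left h1 hηm.le
          _ = C * c ^ m := hcalc
      have h3 : (0:ℝ) ≤ η ^ m * (φ (c / η)).toReal :=
        mul_nonneg (Real.rpow_nonneg hη0.le m) ENNReal.toReal_nonneg
      simp only [hFfun]
      rw [Real.norm_of_nonneg (pow_nonneg h3 K)]
      exact pow_le_pow_left₀ h3 h2 K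
    · have heq : (fun ω => (C * (γ * (1 + W ω)) ^ m) ^ K) =ᵐ[P]
          (fun ω => (C ^ K * γ ^ (m * (K:ℝ))) * (1 + W ω) ^ (m * (K:ℝ))) := by
        filter_upwards [hW0] with ω hω
        have h1w : (0:ℝ) ≤ 1 + W ω := by linarith
        rw [Real.mul_rpow hγ.le h1w, mul_pow, mul_pow,
          ← Real.rpow_natCast (γ ^ m) K, ← Real.rpow_mul hγ.le,
          ← Real.rpow_natCast ((1 + W ω) ^ m) K, ← Real.rpow_mul h1w]
        ring
      exact ((hInt.const_mul _).congr heq.symm)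
    · filter_upwards [hW0] with ω hω
      set c : ℝ := γ * (1 + W ω) with hc
      have h1w : (0:ℝ) ≤ 1 + W ω := by linarith
      have hc0 : 0 < c := mul_pos hγ (by linarith)
      have hτ : Tendsto (fun η : ℝ => c / η) atTop (nhdsWithin 0 (Set.Ioi 0)) := by
        rw [tendsto_nhdsWithin_iff]
        constructor
        · exact tendsto_const_nhds.div_atTop tendsto_id
        · filter_upwards [eventually_gt_atTop (0:ℝ)] with η hη
          exact div_pos hc0 hη
      have h1 := hφratio.comp hτ
      have h2 : Tendsto (fun η : ℝ => (c ^ m * ((φ (c / η)).toReal / (c / η) ^ m)) ^ K) atTop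
          (nhds ((c ^ m * L) ^ K)) := (h1.const_mul (c ^ m)).pow K
      have hev : (fun η : ℝ => (c ^ m * ((φ (c / η)).toReal / (c / η) ^ m)) ^ K)
          =ᶠ[atTop] fun η => Ffun η ω := by
        filter_upwards [eventually_gt_atTop (0:ℝ)] with η hη
        simp only [hFfun]
        congr 1
        have hcm : (0:ℝ) < c ^ m := Real.rpow_pos_of_pos hc0 m
        have hηm : (0:ℝ) < η ^ m := Real.rpow_pos_of_pos hη m
        rw [Real.div_rpow hc0.le hη.le]
        field_simp
        ring
      have h3 := h2.congr' hev
      have hval : (c ^ m * L) ^ K = const * (1 + W ω) ^ (m * (K:ℝ)) := by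
        have hγb : γ * b = m * γ / Ωb := by rw [hbdef]; ring
        rw [hc, hLdef, hconstdef]
        rw [Real.mul_rpow hγ.le h1w]
        rw [show γ ^ m * (1 + W ω) ^ m * (b ^ m / Real.Gamma (m + 1))
            = (γ * b) ^ m * (1 + W ω) ^ m * (1 / Real.Gamma (m + 1)) by
          rw [Real.mul_rpow hγ.le hb0.le]; ring]
        rw [mul_pow, mul_pow,
          ← Real.rpow_natCast ((γ * b) ^ m) K, ← Real.rpow_mul (by positivity),
          ← Real.rpow_natCast ((1 + W ω) ^ m) K, ← Real.rpow_mul h1w, hγb]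
        ring
      rw [← hval]
      exact h3
  have hfinal : Tendsto (fun η : ℝ => η ^ (m * K) *
      (P {ω | ∀ k, min (η * Z k ω) (η * V k ω) < γ * (1 + W ω)}).toReal) atTop
      (nhds (∫ ω, const * (1 + W ω) ^ (m * (K:ℝ)) ∂P)) := by
    refine Tendsto.congr' ?_ hDCT
    filter_upwards [eventually_gt_atTop (0:ℝ)] with η hη
    exact (key η hη).symm
  rw [integral_const_mul] at hfinal
  rw [hconstdef] at hfinal
  exact hfinal


end
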